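/- Let $C(z,u)$ be a power series with non-negative coefficients, $z \mid C(z,u)$, $u^k \nmid C(z,u)$, $C(z,0)\ne 0$, and fix $k\ge 1$. Among the $k$ Puiseux series solutions $u(z)$ with $u(0)=0$ of $u^k = C(z,u)$, there is exactly one, $u_1(z)$, that is real-valued and positive for small $z>0$, and $|u_i(z)| \le u_1(z)$ holds for every solution $u_i$ and all sufficiently small $z>0$. -/

import Mathlib

open Set

noncomputable def auxF (Cc : ℕ → ℕ → ℝ) (z x : ℝ) : ℝ :=
  ∑' p : ℕ × ℕ, Cc p.1 p.2 * z ^ p.1 * x ^ p.2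

lemma aux_powdiff' {y v : ℝ} (hy : 0 ≤ y) (h : y ≤ v) :
    ∀ n : ℕ, v ^ (n+1) - y ^ (n+1) ≤ ((n:ℝ)+1) * v ^ n * (v - y) := by
  intro n
  induction n with
  | zero => simp
  | succ n ih =>
    have hv : 0 ≤ v := le_trans hy h
    have hyv : y ^ (n+1) ≤ v ^ (n+1) := pow_le_pow_left₀ hy h _
    have h2 : v ^ (n+2) - y ^ (n+2) = v * (v ^ (n+1) - y ^ (n+1)) + y ^ (n+1) * (v - y) := by
      ring
    have h3 : v * (v ^ (n+1) - y ^ (n+1)) ≤ v * (((n:ℝ)+1) * v ^ n * (v - y)) :=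
      mul_le_mul_of_nonneg_left ih hv
    have h4 : y ^ (n+1) * (v - y) ≤ v ^ (n+1) * (v - y) :=
      mul_le_mul_of_nonneg_right hyv (by linarith)
    have h5 : v * (((n:ℝ)+1) * v ^ n * (v - y)) = ((n:ℝ)+1) * v ^ (n+1) * (v - y) := by ring
    push_cast
    nlinarith [h2, h3, h4, h5]

lemma aux_powdiff {y v : ℝ} (hy : 0 ≤ y) (h : y ≤ v) {m : ℕ} (hm : 1 ≤ m) :
    v ^ m - y ^ m ≤ (m:ℝ) * v ^ (m-1) * (v - y) := by
  obtain ⟨n, rfl⟩ : ∃ n, m = n + 1 := ⟨m - 1, by omega⟩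
  simpa using aux_powdiff' hy h n


set_option maxHeartbeats 2000000 in
/-- Let `C(z,u) = ∑ Cc i m z^i u^m` have non-negative coefficients with
`z ∣ C`, `u^k ∤ C`, `C(z,0) ≠ 0`, `k ≥ 1`, and positive radius of convergence.  Among the
solutions `u(z)` with `u(0) = 0` of `u^k = C(z,u)` there is exactly one, `u₁`, that is
real and positive for small `z > 0`, and every (complex, continuous) solution vanishing at
`0` satisfies `|u(z)| ≤ u₁(z)` for all sufficiently small `z > 0`. -/
theorem stmt10 (k : ℕ) (hk : 1 ≤ k) (Cc : ℕ → ℕ → ℝ)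
    (hnn : ∀ i m, 0 ≤ Cc i m)
    (hzdvd : ∀ m, Cc 0 m = 0)
    (hukndvd : ∃ i m, m < k ∧ Cc i m ≠ 0)
    (hC0 : ∃ i, Cc i 0 ≠ 0)
    (hconv : ∃ R : ℝ, 0 < R ∧ Summable (fun p : ℕ × ℕ => Cc p.1 p.2 * R ^ p.1 * R ^ p.2)) :
    ∃ ε : ℝ, 0 < ε ∧ ∃ u1 : ℝ → ℝ,
      ContinuousOn u1 (Ico 0 ε) ∧ u1 0 = 0 ∧
      (∀ z ∈ Ioo 0 ε, 0 < u1 z) ∧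
      (∀ z ∈ Ico 0 ε,
        (u1 z) ^ k = ∑' p : ℕ × ℕ, Cc p.1 p.2 * z ^ p.1 * (u1 z) ^ p.2) ∧
      -- uniqueness: `u₁` is the only positive real solution vanishing at `0`
      (∀ v : ℝ → ℝ, ContinuousOn v (Ico 0 ε) → v 0 = 0 →
        (∀ z ∈ Ioo 0 ε, 0 < v z) →
        (∀ z ∈ Ico 0 ε,
          (v z) ^ k = ∑' p : ℕ × ℕ, Cc p.1 p.2 * z ^ p.1 * (v z) ^ p.2) →
        ∃ δ : ℝ, 0 < δ ∧ EqOn v u1 (Ico 0 δ)) ∧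
      -- domination: any solution vanishing at `0` is dominated in modulus by `u₁`
      (∀ w : ℝ → ℂ, ContinuousOn w (Ico 0 ε) → w 0 = 0 →
        (∀ z ∈ Ico 0 ε,
          (w z) ^ k = ∑' p : ℕ × ℕ, (Cc p.1 p.2 : ℂ) * (z : ℂ) ^ p.1 * (w z) ^ p.2) →
        ∃ δ : ℝ, 0 < δ ∧ ∀ z ∈ Ioo 0 δ, ‖w z‖ ≤ u1 z) := by
  classical
  obtain ⟨R, hR, hS⟩ := hconv
  obtain ⟨i0, hi0⟩ := hC0
  have hk0 : k ≠ 0 := by omega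
  set Ic : ℕ → ℕ → ℝ := fun i m => if m < k then 0 else Cc i m with hIc_def
  set Dc : ℕ → ℕ → ℝ := fun i m => if m < k then Cc i m else 0 with hDc_def
  have hIcnn : ∀ i m, 0 ≤ Ic i m := by
    intro i m; simp only [hIc_def]; split <;> [rfl; exact hnn i m]
  have hDcnn : ∀ i m, 0 ≤ Dc i m := by
    intro i m; simp only [hDc_def]; split <;> [exact hnn i m; rfl]
  have hIcle : ∀ i m, Ic i m ≤ Cc i m := by
    intro i m; simp only [hIc_def]; split <;> [exact hnn i m; rfl]
  have hDcle : ∀ i m, Dc i m ≤ Cc i m := by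
    intro i m; simp only [hDc_def]; split <;> [rfl; exact hnn i m]
  -- radius
  set a : ℝ := min R 1 / 2 with ha_def
  have hminR : 0 < min R 1 := lt_min hR one_pos
  have ha : 0 < a := by positivity
  have h2a : 2 * a ≤ R := by
    have := min_le_left R 1; simp only [ha_def]; linarith
  have haR : a ≤ R := by linarith
  -- summability of general coefficient families
  have hSgen : ∀ (Ec : ℕ → ℕ → ℝ), (∀ i m, 0 ≤ Ec i m) → (∀ i m, Ec i m ≤ Cc i m) →
      ∀ z x : ℝ, 0 ≤ z → z ≤ R → 0 ≤ x → x ≤ R →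
      Summable (fun p : ℕ × ℕ => Ec p.1 p.2 * z ^ p.1 * x ^ p.2) := by
    intro Ec hEnn hEle z x hz0 hzR hx0 hxR
    refine Summable.of_nonneg_of_le (fun p => ?_) (fun p => ?_) hS
    · exact mul_nonneg (mul_nonneg (hEnn _ _) (pow_nonneg hz0 _)) (pow_nonneg hx0 _)
    · refine mul_le_mul ?_ (pow_le_pow_left₀ hx0 hxR _) (pow_nonneg hx0 _)
        (mul_nonneg (hnn _ _) (pow_nonneg hR.le _))
      refine mul_le_mul (hEle _ _) (pow_le_pow_left₀ hz0 hzR _) (pow_nonneg hz0 _) (hnn _ _)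
  have hSCC : ∀ z x : ℝ, 0 ≤ z → z ≤ R → 0 ≤ x → x ≤ R →
      Summable (fun p : ℕ × ℕ => Cc p.1 p.2 * z ^ p.1 * x ^ p.2) :=
    hSgen Cc hnn (fun _ _ => le_refl _)
  -- summability of the M3 family
  have hSM3 : Summable (fun p : ℕ × ℕ => Cc p.1 p.2 * a ^ (p.1 - 1) * a ^ p.2) := by
    refine Summable.of_nonneg_of_le (fun p => ?_) (fun p => ?_) (hS.mul_right R⁻¹)
    · exact mul_nonneg (mul_nonneg (hnn _ _) (pow_nonneg ha.le _)) (pow_nonneg ha.le _)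
    · obtain ⟨i, m⟩ := p
      match i with
      | 0 =>
        simp only [hzdvd]
        have : 0 ≤ Cc 0 m * R ^ 0 * R ^ m * R⁻¹ := by
          simp [hzdvd]
        simpa [hzdvd] using this
      | j+1 =>
        have hkey : Cc (j+1) m * a ^ j * a ^ m ≤ Cc (j+1) m * R ^ j * R ^ m := by
          refine mul_le_mul ?_ (pow_le_pow_left₀ ha.le haR _) (pow_nonneg ha.le _)
            (mul_nonneg (hnn _ _) (pow_nonneg hR.le _))
          exact mul_le_mul_of_nonneg_left (pow_le_pow_left₀ ha.le haR _) (hnn _ _)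
        have hrw : Cc (j+1) m * R ^ (j+1) * R ^ m * R⁻¹ = Cc (j+1) m * R ^ j * R ^ m := by
          field_simp [pow_succ]; ring
        simpa [hrw] using hkey
  -- summability of the M family
  have hSM : Summable (fun p : ℕ × ℕ => Ic p.1 p.2 * a ^ (p.1 - 1) * (p.2:ℝ) * a ^ (p.2 - k)) := by
    refine Summable.of_nonneg_of_le (fun p => ?_) (fun p => ?_) (hS.mul_right (R⁻¹ * (a ^ k)⁻¹))
    · exact mul_nonneg (mul_nonneg (mul_nonneg (hIcnn _ _) (pow_nonneg ha.le _))
        (Nat.cast_nonneg _)) (pow_nonneg ha.le _)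
    · obtain ⟨i, m⟩ := p
      by_cases hm : m < k
      · have : Ic i m = 0 := by simp [hIc_def, hm]
        rw [this]
        have : (0:ℝ) ≤ Cc i m * R ^ i * R ^ m * (R⁻¹ * (a ^ k)⁻¹) := by
          have := hnn i m; positivity
        simpa using this
      · push_neg at hm
        match i with
        | 0 =>
          have : Ic 0 m = 0 := by simp [hIc_def, hzdvd]
          rw [this]
          have : (0:ℝ) ≤ Cc 0 m * R ^ 0 * R ^ m * (R⁻¹ * (a ^ k)⁻¹) := by
            have := hnn 0 m; positivity
          simpa using this
        | j+1 =>
          have hIcC : Ic (j+1) m = Cc (j+1) m := by simp [hIc_def, not_lt.2 hm]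
          rw [hIcC]
          have hmcast : ((m:ℝ)) * a ^ (m - k) ≤ R ^ m * (a ^ k)⁻¹ := by
            have hak : (0:ℝ) < a ^ k := by positivity
            have h1 : (m:ℝ) * a ^ (m - k) * a ^ k = (m:ℝ) * a ^ m := by
              rw [mul_assoc, ← pow_add]
              congr 2
              omega
            have h2 : (m:ℝ) ≤ 2 ^ m := by
              exact_mod_cast (Nat.lt_two_pow_self (n := m)).le
            have h3 : (m:ℝ) * a ^ m ≤ (2*a) ^ m := by
              rw [mul_pow]
              exact mul_le_mul_of_nonneg_right h2 (pow_nonneg ha.le _)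
            have h4 : (2*a) ^ m ≤ R ^ m := pow_le_pow_left₀ (by linarith) h2a _
            rw [← div_eq_mul_inv, le_div_iff₀ hak, h1]
            exact h3.trans h4
          have hrw : Cc (j+1) m * R ^ (j+1) * R ^ m * (R⁻¹ * (a ^ k)⁻¹)
              = Cc (j+1) m * R ^ j * (R ^ m * (a ^ k)⁻¹) := by
            field_simp [pow_succ]; ring
          rw [hrw]
          calc Cc (j+1) m * a ^ j * (m:ℝ) * a ^ (m-k)
              = Cc (j+1) m * a ^ j * ((m:ℝ) * a ^ (m-k)) := by ring
            _ ≤ Cc (j+1) m * R ^ j * (R ^ m * (a ^ k)⁻¹) := by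
                refine mul_le_mul ?_ hmcast ?_ ?_
                · exact mul_le_mul_of_nonneg_left (pow_le_pow_left₀ ha.le haR _) (hnn _ _)
                · positivity
                · exact mul_nonneg (hnn _ _) (pow_nonneg hR.le _)
  -- constants
  set M3 : ℝ := ∑' p : ℕ × ℕ, Cc p.1 p.2 * a ^ (p.1 - 1) * a ^ p.2 with hM3_def
  set M : ℝ := ∑' p : ℕ × ℕ, Ic p.1 p.2 * a ^ (p.1 - 1) * (p.2:ℝ) * a ^ (p.2 - k) with hM_def
  have hM3nn : 0 ≤ M3 := tsum_nonneg (fun p => mul_nonneg (mul_nonneg (hnn _ _)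
    (pow_nonneg ha.le _)) (pow_nonneg ha.le _))
  have hMnn : 0 ≤ M := tsum_nonneg (fun p => mul_nonneg (mul_nonneg (mul_nonneg (hIcnn _ _)
    (pow_nonneg ha.le _)) (Nat.cast_nonneg _)) (pow_nonneg ha.le _))
  set ε : ℝ := min a (min (1/(2*M+1)) (a^k/(M3+1))) with hε_def
  have hε : 0 < ε := by
    refine lt_min ha (lt_min (by positivity) (by positivity))
  have hεa : ε ≤ a := min_le_left _ _
  have hεM : ∀ z : ℝ, 0 < z → z < ε → 2 * (z * M) < 1 := by
    intro z hz hzε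
    have h1 : z < 1/(2*M+1) := lt_of_lt_of_le hzε ((min_le_right _ _).trans (min_le_left _ _))
    rw [lt_div_iff₀ (by linarith)] at h1
    nlinarith
  have hεM3 : ∀ z : ℝ, 0 < z → z < ε → z * M3 < a ^ k := by
    intro z hz hzε
    have h1 : z < a^k/(M3+1) := lt_of_lt_of_le hzε ((min_le_right _ _).trans (min_le_right _ _))
    rw [lt_div_iff₀ (by linarith)] at h1
    nlinarith
  clear_value ε
  -- splitting of F
  have hsplit : ∀ z x : ℝ, 0 ≤ z → z ≤ a → 0 ≤ x → x ≤ a →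
      auxF Cc z x = auxF Dc z x + auxF Ic z x := by
    intro z x hz0 hza hx0 hxa
    have hzR : z ≤ R := hza.trans haR
    have hxR : x ≤ R := hxa.trans haR
    rw [auxF, auxF, auxF,
      ← Summable.tsum_add (hSgen Dc hDcnn hDcle z x hz0 hzR hx0 hxR)
        (hSgen Ic hIcnn hIcle z x hz0 hzR hx0 hxR)]
    refine tsum_congr (fun p => ?_)
    simp only [hDc_def, hIc_def]
    split <;> ring
  -- F is positive at x = 0 for z > 0
  have hFpos : ∀ z : ℝ, 0 < z → z ≤ a → 0 < auxF Cc z 0 := by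
    intro z hz hza
    have hS0 := hSCC z 0 hz.le (hza.trans haR) le_rfl hR.le
    have hle : Cc i0 0 * z ^ i0 * (0:ℝ) ^ (0:ℕ) ≤ auxF Cc z 0 := by
      refine Summable.le_tsum hS0 (i0, 0) (fun j _ => ?_)
      exact mul_nonneg (mul_nonneg (hnn _ _) (pow_nonneg hz.le _)) (pow_nonneg le_rfl _)
    have hpos : 0 < Cc i0 0 * z ^ i0 * (0:ℝ) ^ (0:ℕ) := by
      have : 0 < Cc i0 0 := lt_of_le_of_ne (hnn i0 0) (Ne.symm hi0)
      simp only [pow_zero, mul_one]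
      positivity
    exact hpos.trans_le hle
  -- bound F z x ≤ z * M3
  have hFle : ∀ z x : ℝ, 0 < z → z ≤ a → 0 ≤ x → x ≤ a → auxF Cc z x ≤ z * M3 := by
    intro z x hz hza hx0 hxa
    rw [auxF, hM3_def, ← tsum_mul_left]
    refine Summable.tsum_le_tsum (fun p => ?_) (hSCC z x hz.le (hza.trans haR) hx0 (hxa.trans haR))
      (hSM3.mul_left z)
    obtain ⟨i, m⟩ := p
    match i with
    | 0 => simp [hzdvd]
    | j+1 =>
      have : z * (Cc (j+1) m * a ^ ((j+1) - 1) * a ^ m) = Cc (j+1) m * (z * a ^ j) * a ^ m := by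
        simp only [Nat.add_sub_cancel]; ring
      rw [this]
      have h1 : z ^ (j+1) = z * z ^ j := by rw [pow_succ]; ring
      rw [h1]
      refine mul_le_mul ?_ (pow_le_pow_left₀ hx0 hxa _) (pow_nonneg hx0 _)
        (mul_nonneg (hnn _ _) (mul_nonneg hz.le (pow_nonneg ha.le _)))
      refine mul_le_mul_of_nonneg_left ?_ (hnn _ _)
      exact mul_le_mul_of_nonneg_left (pow_le_pow_left₀ hz.le hza _) hz.le
  -- bound on the high part: FI z v ≤ v^k * (z*M)
  have hFIle : ∀ z v : ℝ, 0 < z → z ≤ a → 0 ≤ v → v ≤ a →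
      auxF Ic z v ≤ v ^ k * (z * M) := by
    intro z v hz hza hv0 hva
    have key : v ^ k * (z * M)
        = ∑' p : ℕ × ℕ, v ^ k * (z * (Ic p.1 p.2 * a ^ (p.1-1) * (p.2:ℝ) * a ^ (p.2-k))) := by
      rw [hM_def, tsum_mul_left, tsum_mul_left]
    rw [auxF, key]
    refine Summable.tsum_le_tsum (fun p => ?_)
      (hSgen Ic hIcnn hIcle z v hz.le (hza.trans haR) hv0 (hva.trans haR))
      ((hSM.mul_left z).mul_left (v^k))
    obtain ⟨i, m⟩ := p
    by_cases hm : m < k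
    · simp [hIc_def, hm]
    · push_neg at hm
      have hIcC : Ic i m = Cc i m := by simp [hIc_def, not_lt.2 hm]
      match i with
      | 0 => simp [hIcC, hzdvd]
      | j+1 =>
        rw [hIcC]
        obtain ⟨e, rfl⟩ : ∃ e, m = k + e := ⟨m - k, by omega⟩
        have hme : k + e - k = e := by omega
        have hj1 : j + 1 - 1 = j := by omega
        rw [hme, hj1]
        have hm1 : (1:ℝ) ≤ (k+e:ℕ) := by
          have : 1 ≤ k + e := by omega
          exact_mod_cast this
        calc Cc (j+1) (k+e) * z ^ (j+1) * v ^ (k+e)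
            = (z * v^k) * (Cc (j+1) (k+e) * z^j * v^e) := by
              rw [pow_succ, pow_add]; ring
          _ ≤ (z * v^k) * (Cc (j+1) (k+e) * a^j * (((k+e:ℕ):ℝ) * a^e)) := by
              refine mul_le_mul_of_nonneg_left ?_
                (mul_nonneg hz.le (pow_nonneg hv0 _))
              calc Cc (j+1) (k+e) * z^j * v^e ≤ Cc (j+1) (k+e) * a^j * a^e := by
                    refine mul_le_mul ?_ (pow_le_pow_left₀ hv0 hva _) (pow_nonneg hv0 _)
                      (mul_nonneg (hnn _ _) (pow_nonneg ha.le _))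
                    exact mul_le_mul_of_nonneg_left (pow_le_pow_left₀ hz.le hza _) (hnn _ _)
                _ ≤ Cc (j+1) (k+e) * a^j * (((k+e:ℕ):ℝ) * a^e) := by
                    refine mul_le_mul_of_nonneg_left ?_
                      (mul_nonneg (hnn _ _) (pow_nonneg ha.le _))
                    exact le_mul_of_one_le_left (pow_nonneg ha.le _) hm1
          _ = v^k * (z * (Cc (j+1) (k+e) * a^j * ((k+e:ℕ):ℝ) * a^e)) := by ring
  -- difference bound on the high part
  have hFIdiff : ∀ z y v : ℝ, 0 < z → z ≤ a → 0 ≤ y → y ≤ v → v ≤ a →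
      auxF Ic z v - auxF Ic z y ≤ (v - y) * v ^ (k-1) * (z * M) := by
    intro z y v hz hza hy0 hyv hva
    have hv0 : 0 ≤ v := hy0.trans hyv
    have hSv := hSgen Ic hIcnn hIcle z v hz.le (hza.trans haR) hv0 (hva.trans haR)
    have hSy := hSgen Ic hIcnn hIcle z y hz.le (hza.trans haR) hy0 ((hyv.trans hva).trans haR)
    rw [auxF, auxF, ← Summable.tsum_sub hSv hSy]
    have key : (v - y) * v ^ (k-1) * (z * M)
        = ∑' p : ℕ × ℕ, ((v-y) * v^(k-1) * z) * (Ic p.1 p.2 * a ^ (p.1-1) * (p.2:ℝ) * a ^ (p.2-k)) := by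
      rw [hM_def, tsum_mul_left]; ring
    rw [key]
    refine Summable.tsum_le_tsum (fun p => ?_) (hSv.sub hSy) (hSM.mul_left _)
    obtain ⟨i, m⟩ := p
    by_cases hm : m < k
    · simp [hIc_def, hm]
    · push_neg at hm
      have hIcC : Ic i m = Cc i m := by simp [hIc_def, not_lt.2 hm]
      match i with
      | 0 => simp [hIcC, hzdvd]
      | j+1 =>
        rw [hIcC]
        have hdiff : v ^ m - y ^ m ≤ (m:ℝ) * v ^ (m-1) * (v - y) :=
          aux_powdiff hy0 hyv (by omega)
        have hsub : Cc (j+1) m * z^(j+1) * v^m - Cc (j+1) m * z^(j+1) * y^m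
            = (Cc (j+1) m * z^(j+1)) * (v^m - y^m) := by ring
        rw [hsub]
        have hzn : 0 ≤ Cc (j+1) m * z^(j+1) := mul_nonneg (hnn _ _) (pow_nonneg hz.le _)
        calc (Cc (j+1) m * z^(j+1)) * (v^m - y^m)
            ≤ (Cc (j+1) m * z^(j+1)) * ((m:ℝ) * v ^ (m-1) * (v - y)) :=
              mul_le_mul_of_nonneg_left hdiff hzn
          _ ≤ ((v-y) * v^(k-1) * z) * (Cc (j+1) m * a^((j+1)-1) * (m:ℝ) * a^(m-k)) := by
              have hj1 : j + 1 - 1 = j := by omega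
              rw [hj1]
              have hm1 : v ^ (m-1) = v^(k-1) * v^(m-k) := by
                rw [← pow_add]; congr 1; omega
              rw [hm1, pow_succ]
              have h3 : Cc (j+1) m * z^j ≤ Cc (j+1) m * a^j :=
                mul_le_mul_of_nonneg_left (pow_le_pow_left₀ hz.le hza _) (hnn _ _)
              have h4 : v^(m-k) ≤ a^(m-k) := pow_le_pow_left₀ hv0 hva _
              have hvy : 0 ≤ v - y := by linarith
              calc Cc (j+1) m * (z^j * z) * ((m:ℝ) * (v^(k-1) * v^(m-k)) * (v - y))
                  = ((v-y) * v^(k-1) * z) * ((Cc (j+1) m * z^j) * (m:ℝ) * v^(m-k)) := by ring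
                _ ≤ ((v-y) * v^(k-1) * z) * ((Cc (j+1) m * a^j) * (m:ℝ) * a^(m-k)) := by
                    refine mul_le_mul_of_nonneg_left ?_ ?_
                    · refine mul_le_mul ?_ h4 (pow_nonneg hv0 _)
                        (mul_nonneg (mul_nonneg (hnn _ _) (pow_nonneg ha.le _)) (Nat.cast_nonneg _))
                      exact mul_le_mul_of_nonneg_right h3 (Nat.cast_nonneg _)
                    · exact mul_nonneg (mul_nonneg hvy (pow_nonneg hv0 _)) hz.le
                _ = ((v-y) * v^(k-1) * z) * (Cc (j+1) m * a^j * (m:ℝ) * a^(m-k)) := by ring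
  -- monotone comparison on the low part
  have hFD : ∀ z y v : ℝ, 0 ≤ z → z ≤ a → 0 ≤ y → y ≤ v → v ≤ a →
      auxF Dc z v * y ^ (k-1) ≤ auxF Dc z y * v ^ (k-1) := by
    intro z y v hz0 hza hy0 hyv hva
    have hv0 : 0 ≤ v := hy0.trans hyv
    have hSv := hSgen Dc hDcnn hDcle z v hz0 (hza.trans haR) hv0 (hva.trans haR)
    have hSy := hSgen Dc hDcnn hDcle z y hz0 (hza.trans haR) hy0 ((hyv.trans hva).trans haR)
    rw [auxF, auxF, ← tsum_mul_right, ← tsum_mul_right]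
    refine Summable.tsum_le_tsum (fun p => ?_) (hSv.mul_right _) (hSy.mul_right _)
    obtain ⟨i, m⟩ := p
    by_cases hm : m < k
    · have hDcC : Dc i m = Cc i m := by simp [hDc_def, hm]
      rw [hDcC]
      obtain ⟨d, hd⟩ : ∃ d, k - 1 = m + d := ⟨k - 1 - m, by omega⟩
      rw [hd, pow_add, pow_add]
      calc Cc i m * z^i * v^m * (y^m * y^d)
          = (Cc i m * z^i * v^m * y^m) * y^d := by ring
        _ ≤ (Cc i m * z^i * v^m * y^m) * v^d := by
            refine mul_le_mul_of_nonneg_left (pow_le_pow_left₀ hy0 hyv _) ?_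
            exact mul_nonneg (mul_nonneg (mul_nonneg (hnn _ _) (pow_nonneg hz0 _))
              (pow_nonneg hv0 _)) (pow_nonneg hy0 _)
        _ = Cc i m * z^i * y^m * (v^m * v^d) := by ring
    · simp [hDc_def, hm]
  -- nonnegativity of the parts
  have hFnn : ∀ (Ec : ℕ → ℕ → ℝ), (∀ i m, 0 ≤ Ec i m) → ∀ z x : ℝ, 0 ≤ z → 0 ≤ x →
      0 ≤ auxF Ec z x := by
    intro Ec hEnn z x hz0 hx0
    exact tsum_nonneg (fun p => mul_nonneg (mul_nonneg (hEnn _ _) (pow_nonneg hz0 _))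
      (pow_nonneg hx0 _))
  clear_value M3 M
  -- THE comparison lemma
  have comp : ∀ z : ℝ, 0 < z → z < ε → ∀ y v : ℝ, 0 < y → y ≤ a → 0 < v → v ≤ a →
      auxF Cc z y ≤ y ^ k → v ^ k ≤ auxF Cc z v → v ≤ y := by
    intro z hz hzε y v hy0 hya hv0 hva hysub hvsup
    by_contra hvy
    push_neg at hvy   -- y < v
    have hza : z ≤ a := (le_of_lt hzε).trans hεa
    have hyv : y ≤ v := hvy.le
    obtain ⟨K, hK⟩ : ∃ K, k = K + 1 := ⟨k - 1, by omega⟩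
    have hk1 : k - 1 = K := by omega
    have hDy := hsplit z y hz.le hza hy0.le hya
    have hDv := hsplit z v hz.le hza hv0.le hva
    set Dy := auxF Dc z y
    set Dv := auxF Dc z v
    set Iy := auxF Ic z y
    set Iv := auxF Ic z v
    have hyk : Dy + Iy ≤ y ^ k := by rw [← hDy]; exact hysub
    have hvk : v ^ k ≤ Dv + Iv := by rw [← hDv]; exact hvsup
    have h1 : Dv * y ^ K ≤ Dy * v ^ K := by
      have := hFD z y v hz.le hza hy0.le hyv hva
      rwa [hk1] at this
    have h2 : Iv - Iy ≤ (v - y) * v ^ K * (z * M) := by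
      have := hFIdiff z y v hz hza hy0.le hyv hva
      rwa [hk1] at this
    have h3 : Iv ≤ v ^ k * (z * M) := hFIle z v hz hza hv0.le hva
    have hIynn : 0 ≤ Iy := hFnn Ic hIcnn z y hz.le hy0.le
    have hIvnn : 0 ≤ Iv := hFnn Ic hIcnn z v hz.le hv0.le
    have hDvnn : 0 ≤ Dv := hFnn Dc hDcnn z v hz.le hv0.le
    have hykvk : y ^ k ≤ v ^ k := pow_le_pow_left₀ hy0.le hyv _
    -- chain
    have c1 : Dy * v^k + Iy * v^k ≤ y^k * v^k := by
      have := mul_le_mul_of_nonneg_right hyk (pow_nonneg hv0.le k)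
      rw [add_mul] at this; exact this
    have c2 : y^k * v^k ≤ Dv * y^k + Iv * y^k := by
      have := mul_le_mul_of_nonneg_right hvk (pow_nonneg hy0.le k)
      rw [add_mul] at this
      calc y^k * v^k = v^k * y^k := by ring
        _ ≤ Dv * y^k + Iv * y^k := this
    have c3 : Iy * y^k ≤ Iy * v^k := mul_le_mul_of_nonneg_left hykvk hIynn
    have e1 : Dy * v^k - Dv * y^k ≤ (Iv - Iy) * y^k := by
      have e0 : (Iv - Iy) * y^k = Iv * y^k - Iy * y^k := by ring
      linarith
    have e2 : (Iv - Iy) * y^k ≤ ((v - y) * v^K * (z*M)) * y^k :=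
      mul_le_mul_of_nonneg_right h2 (pow_nonneg hy0.le _)
    have c4 : Dv * y^K * v ≤ Dy * v^k := by
      have := mul_le_mul_of_nonneg_right h1 hv0.le
      calc Dv * y^K * v ≤ Dy * v^K * v := this
        _ = Dy * v^k := by rw [hK, pow_succ]; ring
    have e3 : Dv * y^K * (v - y) ≤ Dy * v^k - Dv * y^k := by
      have hyy : y^k = y^K * y := by rw [hK, pow_succ]
      rw [hyy]
      have hr : Dv * y^K * (v - y) = Dv * y^K * v - Dv * (y^K * y) := by ring
      linarith [c4]
    have s1 : Dv * y^K * (v - y) ≤ ((v - y) * v^K * (z*M)) * y^k :=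
      le_trans e3 (le_trans e1 e2)
    have hvysub : 0 < v - y := by linarith
    have s2 : Dv * y^K ≤ v^K * (z*M) * y^k := by
      refine le_of_mul_le_mul_right ?_ hvysub
      calc Dv * y^K * (v - y) ≤ ((v - y) * v^K * (z*M)) * y^k := s1
        _ = v^K * (z*M) * y^k * (v - y) := by ring
    have s3 : Dv * y^K ≤ v^k * (z*M) * y^K := by
      refine s2.trans ?_
      have hyy : y^k = y^K * y := by rw [hK, pow_succ]
      have : v^K * (z*M) * (y^K * y) ≤ v^K * (z*M) * (y^K * v) := by
        have hzM : 0 ≤ z * M := mul_nonneg hz.le hMnn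
        refine mul_le_mul_of_nonneg_left ?_ (mul_nonneg (pow_nonneg hv0.le _) hzM)
        exact mul_le_mul_of_nonneg_left hyv (pow_nonneg hy0.le _)
      calc v^K * (z*M) * y^k = v^K * (z*M) * (y^K * y) := by rw [hyy]
        _ ≤ v^K * (z*M) * (y^K * v) := this
        _ = v^k * (z*M) * y^K := by rw [hK, pow_succ]; ring
    have s4 : Dv ≤ v^k * (z*M) := by
      exact le_of_mul_le_mul_right s3 (pow_pos hy0 K)
    have s5 : v^k - v^k * (z*M) ≤ Dv := by linarith
    have hvkpos : 0 < v^k := pow_pos hv0 k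
    have h2zM := hεM z hz hzε
    have final : v^k * (2*(z*M)) < v^k := by
      calc v^k * (2*(z*M)) < v^k * 1 := mul_lt_mul_of_pos_left h2zM hvkpos
        _ = v^k := mul_one _
    have hrw : v^k * (2*(z*M)) = v^k * (z*M) + v^k * (z*M) := by ring
    linarith
  -- joint continuity of the capped series
  set Fcap : ℝ × ℝ → ℝ := fun q =>
    ∑' p : ℕ × ℕ, Cc p.1 p.2 * (min |q.1| a) ^ p.1 * (min |q.2| a) ^ p.2 with hFcap_def
  have hFcapCont : Continuous Fcap := by
    refine continuous_tsum (f := fun p (q : ℝ × ℝ) =>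
        Cc p.1 p.2 * (min |q.1| a) ^ p.1 * (min |q.2| a) ^ p.2)
      (u := fun p : ℕ × ℕ => Cc p.1 p.2 * a ^ p.1 * a ^ p.2) (fun p => ?_) ?_ ?_
    · exact ((continuous_const.mul
        (((continuous_abs.comp continuous_fst).min continuous_const).pow _)).mul
        (((continuous_abs.comp continuous_snd).min continuous_const).pow _))
    · exact hSCC a a ha.le haR ha.le haR
    · intro p q
      have h1 : 0 ≤ min |q.1| a := le_min (abs_nonneg _) ha.le
      have h2 : 0 ≤ min |q.2| a := le_min (abs_nonneg _) ha.le
      rw [Real.norm_eq_abs, abs_of_nonneg (mul_nonneg (mul_nonneg (hnn _ _)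
        (pow_nonneg h1 _)) (pow_nonneg h2 _))]
      refine mul_le_mul ?_ (pow_le_pow_left₀ h2 (min_le_right _ _) _) (pow_nonneg h2 _)
        (mul_nonneg (hnn _ _) (pow_nonneg ha.le _))
      exact mul_le_mul_of_nonneg_left (pow_le_pow_left₀ h1 (min_le_right _ _) _) (hnn _ _)
  have hFcap_eq : ∀ z x : ℝ, 0 ≤ z → z ≤ a → 0 ≤ x → x ≤ a → Fcap (z, x) = auxF Cc z x := by
    intro z x hz0 hza hx0 hxa
    refine tsum_congr (fun p => ?_)
    rw [abs_of_nonneg hz0, abs_of_nonneg hx0, min_eq_left hza, min_eq_left hxa]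
  clear_value Fcap
  -- existence of a root
  have exroot : ∀ z : ℝ, 0 < z → z < ε → ∃ x : ℝ, 0 < x ∧ x < a ∧ x ^ k = auxF Cc z x := by
    intro z hz hzε
    have hza : z ≤ a := hzε.le.trans hεa
    set f : ℝ → ℝ := fun x => x ^ k - Fcap (z, x) with hf_def
    have hfc : Continuous f :=
      (continuous_pow k).sub (hFcapCont.comp (continuous_const.prodMk continuous_id))
    have hf0 : f 0 < 0 := by
      have h1 : Fcap (z, 0) = auxF Cc z 0 := hFcap_eq z 0 hz.le hza le_rfl ha.le
      have h2 := hFpos z hz hza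
      simp only [hf_def, h1, zero_pow hk0]
      linarith
    have hfa : 0 < f a := by
      have h1 : Fcap (z, a) = auxF Cc z a := hFcap_eq z a hz.le hza ha.le le_rfl
      have h2 := hFle z a hz hza ha.le le_rfl
      have h3 := hεM3 z hz hzε
      simp only [hf_def, h1]
      linarith
    have := intermediate_value_Ioo (le_of_lt ha) hfc.continuousOn
      (show (0:ℝ) ∈ Ioo (f 0) (f a) from ⟨hf0, hfa⟩)
    obtain ⟨x, hx, hfx⟩ := this
    refine ⟨x, hx.1, hx.2, ?_⟩
    have heq : Fcap (z, x) = auxF Cc z x := hFcap_eq z x hz.le hza hx.1.le hx.2.le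
    have hfx' : x ^ k - Fcap (z, x) = 0 := hfx
    rw [heq] at hfx'
    linarith
  -- the distinguished solution
  obtain ⟨u1, hu1, hu10⟩ : ∃ u1 : ℝ → ℝ, (∀ z : ℝ, 0 < z → z < ε →
      0 < u1 z ∧ u1 z < a ∧ (u1 z) ^ k = auxF Cc z (u1 z)) ∧ u1 0 = 0 := by
    refine ⟨fun z => if h : 0 < z ∧ z < ε then (exroot z h.1 h.2).choose else 0, ?_, by simp⟩
    intro z h0 h1
    simp only [dif_pos (⟨h0, h1⟩ : 0 < z ∧ z < ε)]
    exact (exroot z h0 h1).choose_spec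
  -- sign conditions
  have hneg : ∀ z : ℝ, 0 < z → z < ε → ∀ x : ℝ, 0 ≤ x → x < u1 z →
      x ^ k - auxF Cc z x < 0 := by
    intro z hz hzε x hx0 hxu
    obtain ⟨hu0, hua, huk⟩ := hu1 z hz hzε
    by_contra hcon
    push_neg at hcon
    rcases eq_or_lt_of_le hx0 with h | h
    · have := hFpos z hz (hzε.le.trans hεa)
      rw [← h, zero_pow hk0] at hcon
      linarith
    · have : u1 z ≤ x := comp z hz hzε x (u1 z) h (le_of_lt (hxu.trans hua)) hu0 hua.le
        (by linarith) huk.le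
      linarith
  have hpos : ∀ z : ℝ, 0 < z → z < ε → ∀ x : ℝ, u1 z < x → x ≤ a →
      0 < x ^ k - auxF Cc z x := by
    intro z hz hzε x hxu hxa
    obtain ⟨hu0, hua, huk⟩ := hu1 z hz hzε
    by_contra hcon
    push_neg at hcon
    have : x ≤ u1 z := comp z hz hzε (u1 z) x hu0 hua.le (hu0.trans hxu) hxa
      huk.ge (by linarith)
    linarith
  -- pointwise uniqueness
  have huniq : ∀ z : ℝ, 0 < z → z < ε → ∀ x : ℝ, 0 < x → x ≤ a →
      x ^ k = auxF Cc z x → x = u1 z := by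
    intro z hz hzε x hx0 hxa hxeq
    obtain ⟨hu0, hua, huk⟩ := hu1 z hz hzε
    have h1 : u1 z ≤ x := comp z hz hzε x (u1 z) hx0 hxa hu0 hua.le hxeq.ge huk.le
    have h2 : x ≤ u1 z := comp z hz hzε (u1 z) x hu0 hua.le hx0 hxa huk.ge hxeq.le
    exact le_antisymm h2 h1
  -- assemble the answer
  refine ⟨ε, hε, u1, ?_, hu10, ?_, ?_, ?_, ?_⟩
  · -- continuity
    intro z hz
    rcases eq_or_lt_of_le hz.1 with h0 | h0
    · -- continuity at 0
      have hz0 : z = 0 := h0.symm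
      subst hz0
      rw [Metric.continuousWithinAt_iff]
      intro η hη
      refine ⟨min ε (η^k/(M3+1)), lt_min hε (by positivity), ?_⟩
      intro x hx hdist
      rw [Real.dist_eq, sub_zero] at hdist
      rw [Real.dist_eq, hu10, sub_zero]
      rcases eq_or_lt_of_le hx.1 with hx0 | hx0
      · rw [← hx0, hu10, abs_zero]; exact hη
      · obtain ⟨hupos, hua, huk⟩ := hu1 x hx0 hx.2
        have hxa : x ≤ a := hx.2.le.trans hεa
        have hb : (u1 x)^k ≤ x * M3 := by
          rw [huk]; exact hFle x (u1 x) hx0 hxa hupos.le hua.le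
        rw [abs_of_pos hx0] at hdist
        have hxlt : x < η^k/(M3+1) := lt_of_lt_of_le hdist (min_le_right _ _)
        rw [lt_div_iff₀ (by positivity : (0:ℝ) < M3 + 1)] at hxlt
        have h1 : x * M3 ≤ x * (M3 + 1) := by
          refine mul_le_mul_of_nonneg_left (by linarith) hx0.le
        have h2 : (u1 x)^k < η^k := by linarith
        rw [abs_of_pos hupos]
        exact lt_of_pow_lt_pow_left₀ k hη.le h2
    · -- continuity at z > 0
      rw [Metric.continuousWithinAt_iff]
      intro η hη
      obtain ⟨hu0, hua, huk⟩ := hu1 z h0 hz.2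
      set c := u1 z with hc_def
      set η' := min η (min c (a - c)) / 2 with hη'_def
      have hmin3 : 0 < min η (min c (a - c)) := lt_min hη (lt_min hu0 (by linarith))
      have hη'pos : 0 < η' := by positivity
      have hm1 : min η (min c (a - c)) ≤ η := min_le_left _ _
      have hm2 : min η (min c (a - c)) ≤ c := (min_le_right _ _).trans (min_le_left _ _)
      have hm3 : min η (min c (a - c)) ≤ a - c := (min_le_right _ _).trans (min_le_right _ _)
      have hη'c : η' < c := by
        simp only [hη'_def]; linarith
      have hη'a : c + η' < a := by
        simp only [hη'_def]; linarith
      have hη'η : η' < η := by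
        simp only [hη'_def]; linarith
      have hza : z ≤ a := hz.2.le.trans hεa
      have hA : (c - η')^k - auxF Cc z (c - η') < 0 :=
        hneg z h0 hz.2 _ (by linarith) (by linarith)
      have hB : 0 < (c + η')^k - auxF Cc z (c + η') :=
        hpos z h0 hz.2 _ (by linarith) (by linarith)
      have hCA : ContinuousAt (fun s : ℝ => (c - η')^k - Fcap (s, c - η')) z :=
        (continuous_const.sub (hFcapCont.comp
          (continuous_id.prodMk continuous_const))).continuousAt
      have hCB : ContinuousAt (fun s : ℝ => (c + η')^k - Fcap (s, c + η')) z :=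
        (continuous_const.sub (hFcapCont.comp
          (continuous_id.prodMk continuous_const))).continuousAt
      have hvalA : (c - η')^k - Fcap (z, c - η') < 0 := by
        rw [hFcap_eq z _ h0.le hza (by linarith) (by linarith)]; exact hA
      have hvalB : 0 < (c + η')^k - Fcap (z, c + η') := by
        rw [hFcap_eq z _ h0.le hza (by linarith) (by linarith)]; exact hB
      have hEA : ∀ᶠ s in nhds z, (c - η')^k - Fcap (s, c - η') < 0 :=
        hCA.eventually_lt continuousAt_const hvalA
      have hEB : ∀ᶠ s in nhds z, 0 < (c + η')^k - Fcap (s, c + η') :=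
        continuousAt_const.eventually_lt hCB hvalB
      have hEmem : ∀ᶠ s in nhds z, s ∈ Ioo (0:ℝ) ε :=
        isOpen_Ioo.eventually_mem ⟨h0, hz.2⟩
      obtain ⟨δ, hδ, hball⟩ := Metric.eventually_nhds_iff.mp ((hEA.and hEB).and hEmem)
      refine ⟨δ, hδ, ?_⟩
      intro x _ hdist
      obtain ⟨⟨hA', hB'⟩, hxI⟩ := hball hdist
      have hxa : x ≤ a := hxI.2.le.trans hεa
      rw [hFcap_eq x _ hxI.1.le hxa (by linarith) (by linarith)] at hA'
      rw [hFcap_eq x _ hxI.1.le hxa (by linarith) (by linarith)] at hB'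
      have hlow : c - η' ≤ u1 x := by
        by_contra hcon
        push_neg at hcon
        have := hpos x hxI.1 hxI.2 (c - η') hcon (by linarith)
        linarith
      have hhigh : u1 x ≤ c + η' := by
        by_contra hcon
        push_neg at hcon
        have := hneg x hxI.1 hxI.2 (c + η') (by positivity) hcon
        linarith
      rw [Real.dist_eq]
      have : |u1 x - c| ≤ η' := abs_le.2 ⟨by linarith, by linarith⟩
      linarith
  · -- positivity
    intro z hz
    exact (hu1 z hz.1 hz.2).1
  · -- equation
    intro z hz
    rcases eq_or_lt_of_le hz.1 with h0 | h0
    · have hz0 : z = 0 := h0.symm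
      subst hz0
      rw [hu10, zero_pow hk0]
      have hzero : ∀ p : ℕ × ℕ, Cc p.1 p.2 * (0:ℝ)^p.1 * (0:ℝ)^p.2 = 0 := by
        rintro ⟨i, m⟩
        match i with
        | 0 =>
          match m with
          | 0 => simp [hzdvd]
          | n+1 => simp
        | j+1 => simp
      exact ((tsum_congr hzero).trans tsum_zero).symm
    · exact (hu1 z h0 hz.2).2.2
  · -- uniqueness
    intro v hvcont hv0 hvpos hveq
    have hc := hvcont 0 ⟨le_refl 0, hε⟩
    rw [Metric.continuousWithinAt_iff] at hc
    obtain ⟨δ', hδ', hprop⟩ := hc a ha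
    refine ⟨min δ' ε, lt_min hδ' hε, ?_⟩
    intro x hx
    rcases eq_or_lt_of_le hx.1 with h0 | h0
    · rw [← h0]; rw [hv0, hu10]
    · have hxε : x < ε := hx.2.trans_le (min_le_right _ _)
      have hxmem : x ∈ Ico (0:ℝ) ε := ⟨hx.1, hxε⟩
      have hdist : dist x 0 < δ' := by
        rw [Real.dist_eq, sub_zero, abs_of_pos h0]
        exact hx.2.trans_le (min_le_left _ _)
      have hva := hprop hxmem hdist
      rw [hv0, Real.dist_eq, sub_zero] at hva
      have hvx0 : 0 < v x := hvpos x ⟨h0, hxε⟩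
      have hvxa : v x ≤ a := by rw [abs_of_pos hvx0] at hva; exact hva.le
      exact huniq x h0 hxε (v x) hvx0 hvxa (hveq x hxmem)
  · -- domination
    intro w hwcont hw0 hweq
    have hc := hwcont 0 ⟨le_refl 0, hε⟩
    rw [Metric.continuousWithinAt_iff] at hc
    obtain ⟨δ', hδ', hprop⟩ := hc a ha
    refine ⟨min δ' ε, lt_min hδ' hε, ?_⟩
    intro x hx
    have hxε : x < ε := hx.2.trans_le (min_le_right _ _)
    have hxmem : x ∈ Ico (0:ℝ) ε := ⟨hx.1.le, hxε⟩
    have hdist : dist x 0 < δ' := by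
      rw [Real.dist_eq, sub_zero, abs_of_pos hx.1]
      exact hx.2.trans_le (min_le_left _ _)
    have hwa : ‖w x‖ < a := by
      have := hprop hxmem hdist
      rw [hw0, dist_zero_right] at this
      exact this
    set y := ‖w x‖ with hy_def
    have hy0 : 0 ≤ y := norm_nonneg _
    obtain ⟨hupos, hua, huk⟩ := hu1 x hx.1 hxε
    rcases eq_or_lt_of_le hy0 with h0 | h0
    · rw [← h0]; exact hupos.le
    · have hcong : (fun p : ℕ × ℕ => ‖(Cc p.1 p.2 : ℂ) * (x:ℂ)^p.1 * (w x)^p.2‖)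
          = fun p : ℕ × ℕ => Cc p.1 p.2 * x^p.1 * y^p.2 := by
        funext p
        rw [norm_mul, norm_mul, norm_pow, norm_pow, Complex.norm_real, Complex.norm_real,
          Real.norm_eq_abs, Real.norm_eq_abs, abs_of_nonneg (hnn _ _),
          abs_of_nonneg hx.1.le]
      have hsum : Summable (fun p : ℕ × ℕ => ‖(Cc p.1 p.2 : ℂ) * (x:ℂ)^p.1 * (w x)^p.2‖) := by
        rw [hcong]
        exact hSCC x y hx.1.le ((hxε.le.trans hεa).trans haR) hy0 (hwa.le.trans haR)
      have hkey : y^k ≤ auxF Cc x y := by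
        have h1 : y^k = ‖(w x)^k‖ := (norm_pow _ _).symm
        rw [hweq x hxmem] at h1
        calc y^k = ‖∑' p : ℕ × ℕ, (Cc p.1 p.2 : ℂ) * (x:ℂ)^p.1 * (w x)^p.2‖ := by
              rw [h1]
          _ ≤ ∑' p : ℕ × ℕ, ‖(Cc p.1 p.2 : ℂ) * (x:ℂ)^p.1 * (w x)^p.2‖ :=
              norm_tsum_le_tsum_norm hsum
          _ = auxF Cc x y := by rw [hcong]; rfl
      exact comp x hx.1 hxε (u1 x) y hupos hua.le h0 hwa.le huk.ge hkey
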